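/- Let G be a group with a topology in which all right translations are homeomorphisms, and let H be the set of g ∈ G such that left translation by g is a homeomorphism. Suppose for every neighborhood U of the identity there exist a neighborhood W of the identity and a set M with e ∈ M, M ⊆ W ⊆ closure(M), W ⊆ U, and W·M⁻¹ ⊆ U. Then inversion is continuous at e on H: for every neighborhood U of e there exists a neighborhood W of e with H ∩ W ⊆ U⁻¹. -/

import Mathlib

open Pointwise Topology

theorem stmt15 {G : Type*} [Group G] [TopologicalSpace G]
    (hright : ∀ a : G, IsHomeomorph (fun x : G => x * a))
    (H : Set G) (hH : H = {g : G | IsHomeomorph (fun x : G => g * x)})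
    (hBaire : ∀ U ∈ 𝓝 (1 : G), ∃ W ∈ 𝓝 (1 : G), ∃ M : Set G,
      (1 : G) ∈ M ∧ M ⊆ W ∧ W ⊆ closure M ∧ W ⊆ U ∧ W * M⁻¹ ⊆ U) :
    ∀ U ∈ 𝓝 (1 : G), ∃ W ∈ 𝓝 (1 : G), H ∩ W ⊆ U⁻¹ := by
  intro U hU
  obtain ⟨W, hW, M, hM1, hMW, hWclM, hWU, hWMU⟩ := hBaire U hU
  refine ⟨W, hW, ?_⟩
  rintro x ⟨hxH, hxW⟩
  rw [hH] at hxH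
  have hxcl : x ∈ closure M := hWclM hxW
  have hnhds : (fun y => x * y) '' W ∈ 𝓝 x := by
    obtain ⟨O, hOW, hOopen, hO1⟩ := mem_nhds_iff.mp hW
    exact mem_nhds_iff.mpr ⟨(fun y => x * y) '' O, Set.image_mono hOW,
      hxH.isOpenMap O hOopen, ⟨1, hO1, mul_one x⟩⟩
  obtain ⟨m, hmI, hmM⟩ := mem_closure_iff_nhds.mp hxcl _ hnhds
  obtain ⟨w, hwW, hwx⟩ := hmI
  have hx : x⁻¹ = w * m⁻¹ := by rw [← hwx]; group
  have : x⁻¹ ∈ U := hWMU ⟨w, hwW, m⁻¹, Set.inv_mem_inv.mpr hmM, hx.symm⟩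
  exact Set.mem_inv.mpr this
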